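/- For 0 < α < 4/27, the function g_α(z) = (α/f_α(z))·e^{αΓ_α(z)}·∫_z^{a_α} e^{−αΓ_α(z')}dz' satisfies g_α(z) ≥ 3αz^{2/3} for all 0 < z < a_α, and consequently g_α is monotonically increasing on (0, a_α) with lim_{z→a_α} g_α(z) = 3α·a_α^{2/3} < 1. -/

import Mathlib

open Set MeasureTheory Filter

set_option maxHeartbeats 1000000 in
theorem stmt_17 (α a : ℝ) (hα : 0 < α) (hα2 : α < 4/27)
    (f Γ g : ℝ → ℝ)
    (hf : f = fun z => 1 - z ^ ((1:ℝ)/3) + α * z)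
    (ha1 : 1 < a) (ha : f a = 0) (hamin : ∀ z ∈ Set.Ioo (0:ℝ) a, f z ≠ 0)
    (hΓ : Γ = fun z => ∫ t in (0:ℝ)..z, 1 / f t)
    (hg : g = fun z =>
      (α / f z) * Real.exp (α * Γ z) * ∫ t in z..a, Real.exp (-(α * Γ t))) :
    (∀ z ∈ Set.Ioo (0:ℝ) a, 3 * α * z ^ ((2:ℝ)/3) ≤ g z) ∧
    MonotoneOn g (Set.Ioo 0 a) ∧
    Filter.Tendsto g (nhdsWithin a (Set.Iio a)) (nhds (3 * α * a ^ ((2:ℝ)/3))) ∧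
    3 * α * a ^ ((2:ℝ)/3) < 1 := by
  have ha0 : (0:ℝ) < a := lt_trans one_pos ha1
  -- continuity and positivity of f
  have hfc : Continuous f := by
    rw [hf]
    exact (continuous_const.sub (Real.continuous_rpow_const (by norm_num))).add
      (continuous_const.mul continuous_id)
  have hf0 : f 0 = 1 := by
    rw [hf]; simp [Real.zero_rpow (by norm_num : (1:ℝ)/3 ≠ 0)]
  have hfpos : ∀ z ∈ Set.Ico (0:ℝ) a, 0 < f z := by
    rintro z ⟨hz0, hza⟩
    rcases eq_or_lt_of_le hz0 with rfl | hz0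
    · rw [hf0]; norm_num
    by_contra h
    push_neg at h
    have hne : f z ≠ 0 := hamin z ⟨hz0, hza⟩
    have hlt : f z < 0 := lt_of_le_of_ne h hne
    have : (0:ℝ) ∈ Set.Ioo (f z) (f 0) := by rw [hf0]; exact ⟨hlt, one_pos⟩
    obtain ⟨c, hc, hfc0⟩ := intermediate_value_Ioo' hz0.le hfc.continuousOn this
    exact hamin c ⟨hc.1, hc.2.trans hza⟩ hfc0
  -- final inequality 3α a^{2/3} < 1
  have hfin : 3 * α * a ^ ((2:ℝ)/3) < 1 := by
    have h3α : (0:ℝ) < 3 * α := by linarith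
    set b : ℝ := (3*α) ^ (-(3:ℝ)/2) with hbdef
    have hbpos : 0 < b := Real.rpow_pos_of_pos h3α _
    set s : ℝ := (3*α) ^ ((1:ℝ)/2) with hsdef
    have hspos : 0 < s := Real.rpow_pos_of_pos h3α _
    have hs2 : s ^ 2 = 3*α := by
      rw [hsdef, ← Real.rpow_natCast ((3*α) ^ ((1:ℝ)/2)) 2, ← Real.rpow_mul h3α.le]
      norm_num
    have hslt : s < 2/3 := by nlinarith
    have hb13 : b ^ ((1:ℝ)/3) = s⁻¹ := by
      rw [hbdef, hsdef, ← Real.rpow_mul h3α.le, ← Real.rpow_neg_one ((3*α) ^ ((1:ℝ)/2)),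
        ← Real.rpow_mul h3α.le]
      norm_num
    have hαb : α * b = 1/3 * s⁻¹ := by
      have : b = s⁻¹ * (3*α)⁻¹ := by
        rw [hbdef, hsdef, ← Real.rpow_neg_one ((3*α) ^ ((1:ℝ)/2)), ← Real.rpow_mul h3α.le,
          ← Real.rpow_neg_one (3*α), ← Real.rpow_add h3α]
        norm_num
      rw [this]; field_simp
    have hsinv : (3:ℝ)/2 < s⁻¹ := by
      have hss : s * s⁻¹ = 1 := mul_inv_cancel₀ hspos.ne'
      nlinarith
    have hfb : f b < 0 := by
      rw [hf]; simp only
      rw [hb13, hαb]; linarith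
    have hab : a < b := by
      by_contra h
      push_neg at h
      rcases eq_or_lt_of_le h with rfl | h
      · rw [ha] at hfb; exact lt_irrefl 0 hfb
      · exact absurd (hfpos b ⟨hbpos.le, h⟩) (by linarith)
    have h23 : a ^ ((2:ℝ)/3) < 1/(3*α) := by
      have hb23 : b ^ ((2:ℝ)/3) = (3*α)⁻¹ := by
        rw [hbdef, ← Real.rpow_mul h3α.le, ← Real.rpow_neg_one (3*α)]
        norm_num
      calc a ^ ((2:ℝ)/3) < b ^ ((2:ℝ)/3) := Real.rpow_lt_rpow ha0.le hab (by norm_num)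
        _ = 1/(3*α) := by rw [hb23]; ring
    rw [lt_div_iff₀ h3α] at h23
    calc 3 * α * a ^ ((2:ℝ)/3) = a ^ ((2:ℝ)/3) * (3*α) := by ring
      _ < 1 := by linarith
  -- Γ facts
  have hfne : ∀ z ∈ Set.Ico (0:ℝ) a, f z ≠ 0 := fun z hz => (hfpos z hz).ne'
  have hc1f : ContinuousOn (fun t => 1 / f t) (Set.Ico 0 a) :=
    continuousOn_const.div hfc.continuousOn hfne
  have hIIf : ∀ z w : ℝ, z ∈ Set.Ico (0:ℝ) a → w ∈ Set.Ico (0:ℝ) a →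
      IntervalIntegrable (fun t => 1 / f t) MeasureTheory.volume z w := by
    intro z w hz hw
    apply ContinuousOn.intervalIntegrable
    exact hc1f.mono (Set.ordConnected_Ico.uIcc_subset hz hw)
  have hΓd : ∀ z ∈ Set.Ioo (0:ℝ) a, HasDerivAt Γ (1 / f z) z := by
    intro z hz
    rw [hΓ]
    exact intervalIntegral.integral_hasDerivAt_right
      (hIIf 0 z ⟨le_rfl, ha0⟩ ⟨hz.1.le, hz.2⟩)
      ((measurable_const.div hfc.measurable).stronglyMeasurable.stronglyMeasurableAtFilter)
      (continuousAt_const.div hfc.continuousAt (hfne z ⟨hz.1.le, hz.2⟩))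
  have hΓsub : ∀ z w : ℝ, z ∈ Set.Ico (0:ℝ) a → w ∈ Set.Ico (0:ℝ) a →
      Γ w - Γ z = ∫ t in z..w, 1 / f t := by
    intro z w hz hw
    have := intervalIntegral.integral_add_adjacent_intervals
      (hIIf 0 z ⟨le_rfl, ha0⟩ hz) (hIIf z w hz hw)
    rw [hΓ]; simp only
    linarith
  have hΓmono : ∀ z w : ℝ, z ∈ Set.Ico (0:ℝ) a → w ∈ Set.Ico (0:ℝ) a → z ≤ w →
      Γ z ≤ Γ w := by
    intro z w hz hw hzw
    have h0 : 0 ≤ ∫ t in z..w, 1 / f t := by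
      apply intervalIntegral.integral_nonneg hzw
      intro u hu
      have : u ∈ Set.Ico (0:ℝ) a := ⟨hz.1.trans hu.1, lt_of_le_of_lt hu.2 hw.2⟩
      exact le_of_lt (div_pos one_pos (hfpos u this))
    have := hΓsub z w hz hw
    linarith
  -- E and ψ
  obtain ⟨E, hE⟩ : ∃ E : ℝ → ℝ, E = fun t => Real.exp (-(α * Γ t)) := ⟨_, rfl⟩
  obtain ⟨ψ, hψ⟩ : ∃ ψ : ℝ → ℝ, ψ = fun t => 1/3 * t ^ ((1:ℝ)/3 - 1) * E t := ⟨_, rfl⟩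
  have hEpos : ∀ t, 0 < E t := fun t => by rw [hE]; exact Real.exp_pos _
  have hEc : ContinuousOn E (Set.Ioo 0 a) := by
    rw [hE]
    intro t ht
    exact (Real.continuous_exp.continuousAt.comp
      ((continuousAt_const.mul (hΓd t ht).continuousAt).neg)).continuousWithinAt
  have hEmono : ∀ z w : ℝ, z ∈ Set.Ioo (0:ℝ) a → w ∈ Set.Ico z a → E w ≤ E z := by
    intro z w hz hw
    rw [hE]
    have hΓle : Γ z ≤ Γ w := hΓmono z w ⟨hz.1.le, hz.2⟩
      ⟨hz.1.le.trans hw.1, hw.2⟩ hw.1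
    exact Real.exp_le_exp.2 (neg_le_neg (mul_le_mul_of_nonneg_left hΓle hα.le))
  have hψpos : ∀ t ∈ Set.Ioo (0:ℝ) a, 0 < ψ t := by
    intro t ht
    rw [hψ]
    have := Real.rpow_pos_of_pos ht.1 ((1:ℝ)/3 - 1)
    have := hEpos t
    positivity
  have hψc : ContinuousOn ψ (Set.Ioo 0 a) := by
    rw [hψ]
    intro t ht
    exact ((continuousWithinAt_const.mul
      (Real.continuousAt_rpow_const t _ (Or.inl ht.1.ne')).continuousWithinAt).mul (hEc t ht))
  have hψbd : ∀ z ∈ Set.Ioo (0:ℝ) a, ∀ t ∈ Set.Ico z a,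
      ψ t ≤ 1/3 * z ^ ((1:ℝ)/3 - 1) * E z := by
    intro z hz t ht
    rw [hψ]
    have h1 : t ^ ((1:ℝ)/3 - 1) ≤ z ^ ((1:ℝ)/3 - 1) :=
      Real.rpow_le_rpow_of_nonpos hz.1 ht.1 (by norm_num)
    have h2 : E t ≤ E z := hEmono z t hz ht
    have h3 : (0:ℝ) < t ^ ((1:ℝ)/3 - 1) :=
      Real.rpow_pos_of_pos (lt_of_lt_of_le hz.1 ht.1) _
    nlinarith [hEpos t, hEpos z]
  -- integrability
  have hIntOn : ∀ (u : ℝ → ℝ) (z C : ℝ), z ∈ Set.Ioo (0:ℝ) a →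
      ContinuousOn u (Set.Ioo 0 a) → (∀ t ∈ Set.Ico z a, ‖u t‖ ≤ C) →
      MeasureTheory.IntegrableOn u (Set.Icc z a) MeasureTheory.volume := by
    intro u z C hz huc hbd
    rw [integrableOn_Icc_iff_integrableOn_Ico]
    have hsub : Set.Ico z a ⊆ Set.Ioo 0 a := fun t ht => ⟨lt_of_lt_of_le hz.1 ht.1, ht.2⟩
    constructor
    · exact (huc.mono hsub).aestronglyMeasurable measurableSet_Ico
    · exact MeasureTheory.HasFiniteIntegral.restrict_of_bounded (C := C) measure_Ico_lt_top
        ((MeasureTheory.ae_restrict_iff' measurableSet_Ico).2 (MeasureTheory.ae_of_all _ hbd))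
  have hEIntOn : ∀ z ∈ Set.Ioo (0:ℝ) a,
      MeasureTheory.IntegrableOn E (Set.Icc z a) MeasureTheory.volume := by
    intro z hz
    refine hIntOn E z (E z) hz hEc (fun t ht => ?_)
    rw [Real.norm_eq_abs, abs_of_pos (hEpos t)]
    exact hEmono z t hz ht
  have hψIntOn : ∀ z ∈ Set.Ioo (0:ℝ) a,
      MeasureTheory.IntegrableOn ψ (Set.Icc z a) MeasureTheory.volume := by
    intro z hz
    refine hIntOn ψ z (1/3 * z ^ ((1:ℝ)/3 - 1) * E z) hz hψc (fun t ht => ?_)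
    rw [Real.norm_eq_abs, abs_of_pos (hψpos t ⟨lt_of_lt_of_le hz.1 ht.1, ht.2⟩)]
    exact hψbd z hz t ht
  have hIIE : ∀ z w : ℝ, z ∈ Set.Ioo (0:ℝ) a → z ≤ w → w ≤ a →
      IntervalIntegrable E MeasureTheory.volume z w := by
    intro z w hz hzw hwa
    apply MeasureTheory.IntegrableOn.intervalIntegrable
    apply (hEIntOn z hz).mono_set
    rw [Set.uIcc_of_le hzw]
    exact Set.Icc_subset_Icc le_rfl hwa
  have hIIψ : ∀ z w : ℝ, z ∈ Set.Ioo (0:ℝ) a → z ≤ w → w ≤ a →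
      IntervalIntegrable ψ MeasureTheory.volume z w := by
    intro z w hz hzw hwa
    apply MeasureTheory.IntegrableOn.intervalIntegrable
    apply (hψIntOn z hz).mono_set
    rw [Set.uIcc_of_le hzw]
    exact Set.Icc_subset_Icc le_rfl hwa
  -- derivative of φ = f·E
  have hφd : ∀ t ∈ Set.Ioo (0:ℝ) a, HasDerivAt (fun t => f t * E t) (-ψ t) t := by
    intro t ht
    have hft : f t ≠ 0 := hfne t ⟨ht.1.le, ht.2⟩
    have hfd : HasDerivAt f (α - 1/3 * t ^ ((1:ℝ)/3 - 1)) t := by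
      rw [hf]
      have h1 : HasDerivAt (fun z : ℝ => z ^ ((1:ℝ)/3)) (((1:ℝ)/3) * t ^ ((1:ℝ)/3 - 1)) t :=
        Real.hasDerivAt_rpow_const (Or.inl ht.1.ne')
      have h2 := ((hasDerivAt_const t (1:ℝ)).sub h1).add ((hasDerivAt_id t).const_mul α)
      refine h2.congr_deriv ?_
      ring
    have hEd : HasDerivAt E (E t * (-(α * (1 / f t)))) t := by
      rw [hE]
      exact (((hΓd t ht).const_mul α).neg).exp
    have h := hfd.mul hEd
    refine h.congr_deriv ?_
    rw [hψ]
    field_simp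
    ring
  -- step identity
  have hstep : ∀ z w : ℝ, z ∈ Set.Ioo (0:ℝ) a → w ∈ Set.Ico z a →
      f z * E z - f w * E w = ∫ t in z..w, ψ t := by
    intro z w hz hw
    have hsub : Set.uIcc z w ⊆ Set.Ioo 0 a := by
      rw [Set.uIcc_of_le hw.1]
      intro t ht
      exact ⟨lt_of_lt_of_le hz.1 ht.1, lt_of_le_of_lt ht.2 hw.2⟩
    have h := intervalIntegral.integral_eq_sub_of_hasDerivAt
      (f := fun t => f t * E t) (f' := fun t => -ψ t)
      (fun t ht => hφd t (hsub ht)) ((hIIψ z w hz hw.1 hw.2.le).neg)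
    rw [intervalIntegral.integral_neg] at h
    linarith
  -- key identity
  have hkey : ∀ z ∈ Set.Ioo (0:ℝ) a, f z * E z = ∫ t in z..a, ψ t := by
    intro z hz
    have hev : ∀ᶠ w in nhdsWithin a (Set.Iio a), w ∈ Set.Ioo z a :=
      Ioo_mem_nhdsLT hz.2
    have h1 : Filter.Tendsto (fun w => f w * E w) (nhdsWithin a (Set.Iio a)) (nhds 0) := by
      refine squeeze_zero_norm' (a := fun w => f w * E z) ?_ ?_
      · filter_upwards [hev] with w hw
        have hfw := hfpos w ⟨(hz.1.trans hw.1).le, hw.2⟩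
        rw [Real.norm_eq_abs, abs_of_pos (mul_pos hfw (hEpos w))]
        exact mul_le_mul_of_nonneg_left (hEmono z w hz ⟨hw.1.le, hw.2⟩) hfw.le
      · have : Filter.Tendsto f (nhdsWithin a (Set.Iio a)) (nhds (f a)) :=
          (hfc.tendsto a).mono_left nhdsWithin_le_nhds
        rw [ha] at this
        simpa using this.mul_const (E z)
    have h2 : Filter.Tendsto (fun w => ∫ t in z..w, ψ t) (nhdsWithin a (Set.Iio a))
        (nhds (∫ t in z..a, ψ t)) := by
      rw [← tendsto_sub_nhds_zero_iff]
      refine squeeze_zero_norm'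
        (a := fun w => max (1/3 * z ^ ((1:ℝ)/3 - 1) * E z) ‖ψ a‖ * |a - w|) ?_ ?_
      · filter_upwards [hev] with w hw
        have hwI : w ∈ Set.Ioo (0:ℝ) a := ⟨hz.1.trans hw.1, hw.2⟩
        have hsplit : (∫ t in z..w, ψ t) + ∫ t in w..a, ψ t = ∫ t in z..a, ψ t :=
          intervalIntegral.integral_add_adjacent_intervals
            (hIIψ z w hz hw.1.le hw.2.le) (hIIψ w a hwI hw.2.le le_rfl)
        have heq : (∫ t in z..w, ψ t) - ∫ t in z..a, ψ t = -(∫ t in w..a, ψ t) := by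
          linarith
        rw [heq, norm_neg]
        apply intervalIntegral.norm_integral_le_of_norm_le_const
        intro t ht
        rw [Set.uIoc_of_le hw.2.le] at ht
        rcases eq_or_lt_of_le ht.2 with rfl | hta
        · exact le_max_right _ _
        · refine le_trans ?_ (le_max_left _ _)
          have htI : t ∈ Set.Ico z a := ⟨hw.1.le.trans ht.1.le, hta⟩
          rw [Real.norm_eq_abs,
            abs_of_pos (hψpos t ⟨lt_of_lt_of_le hz.1 htI.1, hta⟩)]
          exact hψbd z hz t htI
      · have hc : Filter.Tendsto (fun w : ℝ => max (1/3 * z ^ ((1:ℝ)/3 - 1) * E z) ‖ψ a‖ * |a - w|)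
            (nhds a) (nhds (max (1/3 * z ^ ((1:ℝ)/3 - 1) * E z) ‖ψ a‖ * |a - a|)) := by
          exact (continuous_const.mul
            (continuous_abs.comp (continuous_const.sub continuous_id))).tendsto a
        simp only [sub_self, abs_zero, mul_zero] at hc
        exact hc.mono_left nhdsWithin_le_nhds
    have h3 : Filter.Tendsto (fun w => f z * E z - f w * E w) (nhdsWithin a (Set.Iio a))
        (nhds (f z * E z)) := by
      simpa using tendsto_const_nhds.sub h1
    have heq : ∀ᶠ w in nhdsWithin a (Set.Iio a),
        f z * E z - f w * E w = ∫ t in z..w, ψ t := by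
      filter_upwards [hev] with w hw
      exact hstep z w hz ⟨hw.1.le, hw.2⟩
    exact tendsto_nhds_unique (Filter.Tendsto.congr' heq h3) h2
  -- G and representation of g
  obtain ⟨G, hG⟩ : ∃ G : ℝ → ℝ, G = fun z => ∫ t in z..a, E t := ⟨_, rfl⟩
  have hGpos : ∀ z ∈ Set.Ioo (0:ℝ) a, 0 < G z := by
    intro z hz
    rw [hG]
    exact intervalIntegral.intervalIntegral_pos_of_pos (hIIE z a hz hz.2.le le_rfl)
      (fun t => hEpos t) hz.2
  have hHpos : ∀ z ∈ Set.Ioo (0:ℝ) a, 0 < f z * E z := fun z hz =>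
    mul_pos (hfpos z ⟨hz.1.le, hz.2⟩) (hEpos z)
  have hgz : ∀ z ∈ Set.Ioo (0:ℝ) a, g z = α * G z / (f z * E z) := by
    intro z hz
    have hfz : f z ≠ 0 := (hfpos z ⟨hz.1.le, hz.2⟩).ne'
    have h1 : Real.exp (α * Γ z) * Real.exp (-(α * Γ z)) = 1 := by
      rw [← Real.exp_add]; simp
    have hfz' : 0 < f z := hfpos z ⟨hz.1.le, hz.2⟩
    rw [hg, hG, hE]
    simp only
    rw [div_mul_eq_mul_div, div_mul_eq_mul_div, div_eq_div_iff hfz'.ne'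
      (mul_pos hfz' (Real.exp_pos _)).ne']
    linear_combination (α * (∫ t in z..a, Real.exp (-(α * Γ t))) * f z) * h1
  -- pointwise comparison lemmas
  have hψle : ∀ z t : ℝ, 0 < z → z ≤ t → ψ t ≤ 1/3 * z ^ ((1:ℝ)/3 - 1) * E t := by
    intro z t hz hzt
    rw [hψ]
    have h1 : t ^ ((1:ℝ)/3 - 1) ≤ z ^ ((1:ℝ)/3 - 1) :=
      Real.rpow_le_rpow_of_nonpos hz hzt (by norm_num)
    nlinarith [hEpos t]
  have hψge : ∀ w t : ℝ, 0 < t → t ≤ w → 1/3 * w ^ ((1:ℝ)/3 - 1) * E t ≤ ψ t := by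
    intro w t ht htw
    rw [hψ]
    have h1 : w ^ ((1:ℝ)/3 - 1) ≤ t ^ ((1:ℝ)/3 - 1) :=
      Real.rpow_le_rpow_of_nonpos ht htw (by norm_num)
    nlinarith [hEpos t]
  have hz23 : ∀ z : ℝ, 0 < z → z ^ ((2:ℝ)/3) * z ^ ((1:ℝ)/3 - 1) = 1 := by
    intro z hz
    rw [← Real.rpow_add hz]
    norm_num
  have hHle : ∀ z ∈ Set.Ioo (0:ℝ) a, f z * E z ≤ 1/3 * z ^ ((1:ℝ)/3 - 1) * G z := by
    intro z hz
    rw [hkey z hz, hG]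
    calc (∫ t in z..a, ψ t) ≤ ∫ t in z..a, 1/3 * z ^ ((1:ℝ)/3 - 1) * E t := by
          apply intervalIntegral.integral_mono_on hz.2.le (hIIψ z a hz hz.2.le le_rfl)
            ((hIIE z a hz hz.2.le le_rfl).const_mul _)
          intro t ht
          exact hψle z t hz.1 ht.1
      _ = 1/3 * z ^ ((1:ℝ)/3 - 1) * ∫ t in z..a, E t :=
          intervalIntegral.integral_const_mul _ _
  have hHge : ∀ z ∈ Set.Ioo (0:ℝ) a, 1/3 * a ^ ((1:ℝ)/3 - 1) * G z ≤ f z * E z := by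
    intro z hz
    rw [hkey z hz, hG]
    calc 1/3 * a ^ ((1:ℝ)/3 - 1) * ∫ t in z..a, E t
        = ∫ t in z..a, 1/3 * a ^ ((1:ℝ)/3 - 1) * E t :=
          (intervalIntegral.integral_const_mul _ _).symm
      _ ≤ ∫ t in z..a, ψ t := by
          apply intervalIntegral.integral_mono_on hz.2.le
            ((hIIE z a hz hz.2.le le_rfl).const_mul _) (hIIψ z a hz hz.2.le le_rfl)
          intro t ht
          exact hψge a t (lt_of_lt_of_le hz.1 ht.1) ht.2
  -- lower bound
  have hlow : ∀ z ∈ Set.Ioo (0:ℝ) a, 3 * α * z ^ ((2:ℝ)/3) ≤ g z := by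
    intro z hz
    rw [hgz z hz, le_div_iff₀ (hHpos z hz)]
    have h1 := hHle z hz
    have h2 : (0:ℝ) ≤ 3 * α * z ^ ((2:ℝ)/3) :=
      mul_nonneg (by positivity) (Real.rpow_nonneg hz.1.le _)
    calc 3 * α * z ^ ((2:ℝ)/3) * (f z * E z)
        ≤ 3 * α * z ^ ((2:ℝ)/3) * (1/3 * z ^ ((1:ℝ)/3 - 1) * G z) :=
          mul_le_mul_of_nonneg_left h1 h2
      _ = α * G z * (z ^ ((2:ℝ)/3) * z ^ ((1:ℝ)/3 - 1)) := by ring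
      _ = α * G z := by rw [hz23 z hz.1, mul_one]
  -- upper bound
  have hup : ∀ z ∈ Set.Ioo (0:ℝ) a, g z ≤ 3 * α * a ^ ((2:ℝ)/3) := by
    intro z hz
    rw [hgz z hz, div_le_iff₀ (hHpos z hz)]
    have h1 := hHge z hz
    have h2 : (0:ℝ) ≤ 3 * α * a ^ ((2:ℝ)/3) :=
      mul_nonneg (by positivity) (Real.rpow_nonneg ha0.le _)
    calc α * G z = α * G z * (a ^ ((2:ℝ)/3) * a ^ ((1:ℝ)/3 - 1)) := by
          rw [hz23 a ha0, mul_one]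
      _ = 3 * α * a ^ ((2:ℝ)/3) * (1/3 * a ^ ((1:ℝ)/3 - 1) * G z) := by ring
      _ ≤ 3 * α * a ^ ((2:ℝ)/3) * (f z * E z) := mul_le_mul_of_nonneg_left h1 h2
  -- monotonicity
  have hmono : MonotoneOn g (Set.Ioo (0:ℝ) a) := by
    intro z hz w hw hzw
    rcases eq_or_lt_of_le hzw with rfl | hzw'
    · exact le_rfl
    rw [hgz z hz, hgz w hw, div_le_div_iff₀ (hHpos z hz) (hHpos w hw)]
    have hsplitE : (∫ t in z..w, E t) + G w = G z := by
      rw [hG]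
      exact intervalIntegral.integral_add_adjacent_intervals
        (hIIE z w hz hzw hw.2.le) (hIIE w a hw hw.2.le le_rfl)
    have hsplitψ : (∫ t in z..w, ψ t) + f w * E w = f z * E z := by
      rw [hkey z hz, hkey w hw]
      exact intervalIntegral.integral_add_adjacent_intervals
        (hIIψ z w hz hzw hw.2.le) (hIIψ w a hw hw.2.le le_rfl)
    have hA0 : 0 ≤ ∫ t in z..w, E t :=
      intervalIntegral.integral_nonneg hzw (fun t _ => (hEpos t).le)
    have hB : 1/3 * w ^ ((1:ℝ)/3 - 1) * ∫ t in z..w, E t ≤ ∫ t in z..w, ψ t := by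
      calc 1/3 * w ^ ((1:ℝ)/3 - 1) * ∫ t in z..w, E t
          = ∫ t in z..w, 1/3 * w ^ ((1:ℝ)/3 - 1) * E t :=
            (intervalIntegral.integral_const_mul _ _).symm
        _ ≤ ∫ t in z..w, ψ t := by
            apply intervalIntegral.integral_mono_on hzw
              ((hIIE z w hz hzw hw.2.le).const_mul _) (hIIψ z w hz hzw hw.2.le)
            intro t ht
            exact hψge w t (lt_of_lt_of_le hz.1 ht.1) ht.2
    have hHw := hHle w hw
    have hGw0 : 0 ≤ G w := (hGpos w hw).le
    have k1 : (∫ t in z..w, E t) * (f w * E w)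
        ≤ (∫ t in z..w, E t) * (1/3 * w ^ ((1:ℝ)/3 - 1) * G w) :=
      mul_le_mul_of_nonneg_left hHw hA0
    have k2 : (1/3 * w ^ ((1:ℝ)/3 - 1) * ∫ t in z..w, E t) * G w
        ≤ (∫ t in z..w, ψ t) * G w :=
      mul_le_mul_of_nonneg_right hB hGw0
    have k3 : (∫ t in z..w, E t) * (f w * E w) ≤ (∫ t in z..w, ψ t) * G w := by
      calc (∫ t in z..w, E t) * (f w * E w)
          ≤ (∫ t in z..w, E t) * (1/3 * w ^ ((1:ℝ)/3 - 1) * G w) := k1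
        _ = (1/3 * w ^ ((1:ℝ)/3 - 1) * ∫ t in z..w, E t) * G w := by ring
        _ ≤ (∫ t in z..w, ψ t) * G w := k2
    have k4 := mul_le_mul_of_nonneg_left k3 hα.le
    calc α * G z * (f w * E w)
        = α * ((∫ t in z..w, E t) * (f w * E w)) + α * (G w * (f w * E w)) := by
          rw [← hsplitE]; ring
      _ ≤ α * ((∫ t in z..w, ψ t) * G w) + α * (G w * (f w * E w)) := by linarith
      _ = α * G w * (f z * E z) := by rw [← hsplitψ]; ring
  -- limit
  have htend : Filter.Tendsto g (nhdsWithin a (Set.Iio a))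
      (nhds (3 * α * a ^ ((2:ℝ)/3))) := by
    have hev : ∀ᶠ z in nhdsWithin a (Set.Iio a), z ∈ Set.Ioo (0:ℝ) a :=
      Ioo_mem_nhdsLT ha0
    refine tendsto_of_tendsto_of_tendsto_of_le_of_le'
      (g := fun z : ℝ => 3 * α * z ^ ((2:ℝ)/3))
      (h := fun _ : ℝ => 3 * α * a ^ ((2:ℝ)/3)) ?_ ?_ ?_ ?_
    · have : ContinuousAt (fun z : ℝ => 3 * α * z ^ ((2:ℝ)/3)) a :=
        continuousAt_const.mul (Real.continuousAt_rpow_const a _ (Or.inl ha0.ne'))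
      exact this.tendsto.mono_left nhdsWithin_le_nhds
    · exact tendsto_const_nhds
    · filter_upwards [hev] with z hz
      exact hlow z hz
    · filter_upwards [hev] with z hz
      exact hup z hz
  exact ⟨hlow, hmono, htend, hfin⟩
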